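/- Let p > 1 and a,b ∈ ℝ with (a,b) ≠ (0,0). Then ∫₀¹ |a + bt|^{p−2} dt ≥ c_p (|a| + |b|)^{p−2}, where c_p := 1 if 1 < p < 2 and c_p := 4^{2−p}/(p−1) if p ≥ 2. -/

import Mathlib

open MeasureTheory Filter Set Metric Topology
open scoped ENNReal NNReal

noncomputable section

/-- Euclidean space ℝⁿ. -/
abbrev En (n : ℕ) : Type := EuclideanSpace ℝ (Fin n)

namespace FracP

variable (n : ℕ)

/-- `gp p t = |t|^{p-2} t`. -/
def gp (p t : ℝ) : ℝ := |t| ^ (p - 2) * t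

/-- The kernel class `Ker(Λ)`: symmetry, translation invariance, growth
`Λ⁻¹ ≤ K(x,y)|x-y|^{n+sp} ≤ Λ` off the diagonal, and continuity in `x` off the diagonal. -/
def IsKernel (s p Λ : ℝ) (K : En n → En n → ℝ) : Prop :=
  (∀ x y, K x y = K y x) ∧
  (∀ x y z : En n, x ≠ y → K (x + z) (y + z) = K x y) ∧
  (∀ x y : En n, x ≠ y →
    Λ⁻¹ ≤ K x y * dist x y ^ ((n : ℝ) + s * p) ∧
      K x y * dist x y ^ ((n : ℝ) + s * p) ≤ Λ) ∧
  (∀ y : En n, ContinuousOn (fun x => K x y) {y}ᶜ)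

/-- The weight `(1+|x|)^{-n-sp}` as an extended nonnegative real. -/
def tailWeight (s p : ℝ) (x : En n) : ℝ≥0∞ :=
  ENNReal.ofReal ((1 + ‖x‖) ^ (-(n : ℝ) - s * p))

/-- `f ∈ L^{p-1}_{sp}(ℝⁿ)`, the tail space. -/
def MemTail (s p : ℝ) (f : En n → ℝ) : Prop :=
  AEMeasurable f volume ∧
  ∫⁻ x : En n, ENNReal.ofReal (|f x| ^ (p - 1)) * tailWeight n s p x < ⊤

/-- The negative part of an `EReal`-valued function, as an `ℝ≥0∞`-valued function. -/
def negE (u : En n → EReal) (x : En n) : ℝ≥0∞ :=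
  if u x = ⊥ then ⊤ else ENNReal.ofReal ((-(u x)).toReal)

/-- `u₋ ∈ L^{p-1}_{sp}(ℝⁿ)` for an `EReal`-valued `u`. -/
def MemTailE (s p : ℝ) (u : En n → EReal) : Prop :=
  ∫⁻ x : En n, (negE n u x) ^ (p - 1) * tailWeight n s p x < ⊤

/-- The truncated integrals whose limit as `ε → 0⁺` is the principal value `L f (x)`. -/
def pvApprox (p : ℝ) (K : En n → En n → ℝ) (f : En n → ℝ) (x : En n) (ε : ℝ) : ℝ :=
  ∫ y in {y : En n | ε ≤ dist x y}, gp p (f x - f y) * K x y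

/-- The principal value `L f (x)` exists and equals `l ∈ [-∞,∞]`. -/
def HasPV (p : ℝ) (K : En n → En n → ℝ) (f : En n → ℝ) (x : En n) (l : EReal) : Prop :=
  Tendsto (fun ε : ℝ => (pvApprox n p K f x ε : EReal)) (𝓝[>] (0 : ℝ)) (𝓝 l)

/-- The principal value `L f (x)` exists, is finite, and equals `I : ℝ`. -/
def HasPVReal (p : ℝ) (K : En n → En n → ℝ) (f : En n → ℝ) (x : En n) (I : ℝ) : Prop :=
  Tendsto (fun ε : ℝ => pvApprox n p K f x ε) (𝓝[>] (0 : ℝ)) (𝓝 I)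

/-- Truncated integrals over `B_ε(x) \ B_δ(x)` (for principal values over a ball). -/
def pvBallApprox (p : ℝ) (K : En n → En n → ℝ) (f : En n → ℝ) (x : En n) (ε δ : ℝ) : ℝ :=
  ∫ y in ball x ε \ ball x δ, gp p (f x - f y) * K x y

/-- Distance to the critical set of `φ` in `D`: `d_φ(x) = dist(x, N_φ)`. -/
def dCrit (φ : En n → ℝ) (D : Set (En n)) (x : En n) : ℝ :=
  Metric.infDist x {y ∈ D | fderiv ℝ φ y = 0}

/-- The class `C²_β(D)`. -/
def MemC2Beta (β : ℝ) (D : Set (En n)) (φ : En n → ℝ) : Prop :=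
  ContDiffOn ℝ 2 φ D ∧
  ∃ C : ℝ, ∀ x ∈ D,
    (min (dCrit n φ D x) 1) ^ (β - 1) / ‖fderiv ℝ φ x‖ +
      ‖fderiv ℝ (fderiv ℝ φ) x‖ / (dCrit n φ D x) ^ (β - 2) ≤ C

/-- `x₀` is an isolated critical point of `φ`. -/
def IsolatedCritPt (φ : En n → ℝ) (x₀ : En n) : Prop :=
  fderiv ℝ φ x₀ = 0 ∧ ∃ ρ > 0, ∀ y ∈ ball x₀ ρ, y ≠ x₀ → fderiv ℝ φ y ≠ 0

/-- Conditions (a)/(b) on a test function `φ` in the definition of viscosity supersolutions. -/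
def TestAdmissible (s p : ℝ) (φ : En n → ℝ) (x₀ : En n) (r : ℝ) : Prop :=
  (2 / (2 - s) < p ∨ fderiv ℝ φ x₀ ≠ 0) ∨
  (p ≤ 2 / (2 - s) ∧ IsolatedCritPt n φ x₀ ∧
    ∃ β : ℝ, s * p / (p - 1) < β ∧ MemC2Beta n β (ball x₀ r) φ)

-- The glued test function `φ_r`: `φ` in `B_r(x₀)` and `u` outside.
open Classical in
def glue (u : En n → EReal) (φ : En n → ℝ) (x₀ : En n) (r : ℝ) : En n → ℝ :=
  fun y => if y ∈ ball x₀ r then φ y else (u y).toReal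

/-- `u` is an `(s,p)`-viscosity supersolution in `Ω`. -/
def IsViscositySupersol (s p : ℝ) (K : En n → En n → ℝ) (Ω : Set (En n))
    (u : En n → EReal) : Prop :=
  Measurable u ∧
  (∀ᵐ x : En n, u x < ⊤) ∧
  (∀ x ∈ Ω, ⊥ < u x) ∧
  LowerSemicontinuousOn u Ω ∧
  MemTailE n s p u ∧
  ∀ (x₀ : En n) (r : ℝ) (φ : En n → ℝ), 0 < r → ball x₀ r ⊆ Ω →
    ContDiffOn ℝ 2 φ (ball x₀ r) →
    ((φ x₀ : EReal) = u x₀) → (∀ x ∈ ball x₀ r, (φ x : EReal) ≤ u x) →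
    TestAdmissible n s p φ x₀ r →
    ∃ l : EReal, HasPV n p K (glue n u φ x₀ r) x₀ l ∧ 0 ≤ l

/-- `v` is an `(s,p)`-viscosity subsolution in `Ω`. -/
def IsViscositySubsol (s p : ℝ) (K : En n → En n → ℝ) (Ω : Set (En n))
    (v : En n → EReal) : Prop :=
  IsViscositySupersol n s p K Ω (fun x => -(v x))

/-- `u ∈ W^{s,p}_loc(Ω)`. -/
def MemWspLoc (s p : ℝ) (Ω : Set (En n)) (u : En n → ℝ) : Prop :=
  ∀ D : Set (En n), IsOpen D → IsCompact (closure D) → closure D ⊆ Ω →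
    (∫⁻ x in D, ENNReal.ofReal (|u x| ^ p) < ⊤) ∧
    (∫⁻ x in D, ∫⁻ y in D,
      ENNReal.ofReal (|u x - u y| ^ p * dist x y ^ (-(n : ℝ) - s * p)) < ⊤)

/-- `φ ∈ C_0^∞(D)`. -/
def IsTestFn (D : Set (En n)) (φ : En n → ℝ) : Prop :=
  ContDiff ℝ (⊤ : ℕ∞) φ ∧ HasCompactSupport φ ∧ tsupport φ ⊆ D

/-- The weak formulation energy pairing. -/
def weakEnergy (p : ℝ) (K : En n → En n → ℝ) (u φ : En n → ℝ) : ℝ :=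
  ∫ x : En n, ∫ y : En n, gp p (u x - u y) * (φ x - φ y) * K x y

/-- `u` is a weak solution of `Lu = 0` in `D`. -/
def IsWeakSolution (s p : ℝ) (K : En n → En n → ℝ) (D : Set (En n)) (u : En n → ℝ) : Prop :=
  MemWspLoc n s p D u ∧ MemTail n s p u ∧
  ∀ φ : En n → ℝ, IsTestFn n D φ → weakEnergy n p K u φ = 0

/-- `u` is a weak supersolution of `Lu = 0` in `D`. -/
def IsWeakSupersol (s p : ℝ) (K : En n → En n → ℝ) (D : Set (En n)) (u : En n → ℝ) : Prop :=
  MemWspLoc n s p D u ∧ MemTail n s p u ∧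
  ∀ φ : En n → ℝ, IsTestFn n D φ → (∀ x, 0 ≤ φ x) → 0 ≤ weakEnergy n p K u φ

/-- `u` is `(s,p)`-superharmonic in `Ω`. -/
def IsSuperharmonic (s p : ℝ) (K : En n → En n → ℝ) (Ω : Set (En n))
    (u : En n → EReal) : Prop :=
  Measurable u ∧
  (∀ᵐ x : En n, u x < ⊤) ∧
  (∀ x ∈ Ω, ⊥ < u x) ∧
  LowerSemicontinuousOn u Ω ∧
  MemTailE n s p u ∧
  ∀ D : Set (En n), IsOpen D → IsCompact (closure D) → closure D ⊆ Ω →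
    ∀ v : En n → ℝ, ContinuousOn v (closure D) → IsWeakSolution n s p K D v →
      (∀ x ∈ frontier D, (v x : EReal) ≤ u x) →
      (∀ᵐ x : En n, x ∉ D → (v x : EReal) ≤ u x) →
      ∀ x ∈ D, (v x : EReal) ≤ u x

/-- `essliminf_{y → x} u(y)`, realized as `sup_{r>0} essinf_{B_r(x)} u`. -/
def essLiminfAt (u : En n → EReal) (x : En n) : EReal :=
  ⨆ r ∈ Ioi (0 : ℝ), essInf u (volume.restrict (ball x r))

end FracP

namespace FracP

/-! Auxiliary lemmas for Statement 5. -/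

private lemma aux_ii_abs_rpow {r : ℝ} (hr : -1 < r) (c d : ℝ) :
    IntervalIntegrable (fun x : ℝ => |x| ^ r) volume c d := by
  have key : ∀ e : ℝ, 0 ≤ e → IntervalIntegrable (fun x : ℝ => |x| ^ r) volume 0 e := by
    intro e he
    rw [intervalIntegrable_iff]
    have h1 := intervalIntegrable_iff.mp
      (intervalIntegral.intervalIntegrable_rpow' hr (a := 0) (b := e))
    refine h1.congr_fun (fun x hx => ?_) measurableSet_uIoc
    rw [Set.uIoc_of_le he] at hx
    rw [abs_of_pos hx.1]
  have key2 : ∀ e : ℝ, IntervalIntegrable (fun x : ℝ => |x| ^ r) volume 0 e := by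
    intro e
    rcases le_or_gt 0 e with he | he
    · exact key e he
    · have h2 := key (-e) (by linarith)
      rw [IntervalIntegrable.iff_comp_neg] at h2
      simpa using h2
  exact (key2 c).symm.trans (key2 d)

private lemma aux_ii_affine {r : ℝ} (hr : -1 < r) (a : ℝ) {b : ℝ} (hb : b ≠ 0) :
    IntervalIntegrable (fun t : ℝ => |a + b * t| ^ r) volume 0 1 := by
  have h1 := aux_ii_abs_rpow hr (a + b * 0) (a + b * 1)
  have h2 := h1.comp_add_left a
  have h3 := h2.comp_mul_left (c := b) (by simp) (by simp)
  have e0 : (a + b * 0 - a) / b = 0 := by field_simp; ring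
  have e1 : (a + b * 1 - a) / b = 1 := by field_simp; ring
  rwa [e0, e1] at h3

private lemma aux_pow_succ {p : ℝ} (hp : 1 < p) {x : ℝ} (hx : 0 ≤ x) :
    x ^ (p - 2) * x = x ^ (p - 1) := by
  rcases hx.eq_or_lt with rfl | hx'
  · simp [Real.zero_rpow (show p - 1 ≠ 0 by intro h; linarith)]
  · rw [show p - 1 = (p - 2) + 1 by ring, Real.rpow_add hx', Real.rpow_one]

private lemma aux_Fnn {p : ℝ} (hp : 1 < p) {x : ℝ} (hx : 0 ≤ x) :
    |x| ^ (p - 2) * x = x ^ (p - 1) := by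
  rw [abs_of_nonneg hx, aux_pow_succ hp hx]

private lemma aux_42 (p : ℝ) : (4 : ℝ) ^ (2 - p) * (2 : ℝ) ^ (p - 2) = (2 : ℝ) ^ (2 - p) := by
  have h4 : (4 : ℝ) = (2 : ℝ) ^ (2 : ℝ) := by
    rw [show ((2 : ℝ) : ℝ) = ((2 : ℕ) : ℝ) by norm_num, Real.rpow_natCast]
    norm_num
  rw [h4, ← Real.rpow_mul (by norm_num : (0:ℝ) ≤ 2),
    ← Real.rpow_add (by norm_num : (0:ℝ) < 2)]
  congr 1
  ring

private lemma aux_inner {p : ℝ} (hp : 2 ≤ p) {a b : ℝ} (ha : 0 ≤ a) (hb : 0 < b) :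
    (a + b) ^ (p - 2) * b ≤ (a + b) ^ (p - 1) - a ^ (p - 1) := by
  have hab : (0:ℝ) < a + b := by linarith
  have h1 : (a + b) ^ (p - 1) = (a + b) ^ (p - 2) * (a + b) :=
    (aux_pow_succ (by linarith) hab.le).symm
  have h2 : a ^ (p - 1) ≤ (a + b) ^ (p - 2) * a := by
    rcases ha.eq_or_lt with rfl | ha'
    · simp [Real.zero_rpow (show p - 1 ≠ 0 by intro h; linarith)]
    · have h3 : a ^ (p - 1) = a ^ (p - 2) * a := (aux_pow_succ (by linarith) ha'.le).symm
      rw [h3]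
      exact mul_le_mul_of_nonneg_right
        (Real.rpow_le_rpow ha'.le (by linarith) (by linarith)) ha'.le
  nlinarith [h1, h2]

private lemma aux_convex {q : ℝ} (hq : 1 ≤ q) {u v : ℝ} (hu : 0 ≤ u) (hv : 0 ≤ v) :
    (2 : ℝ) ^ (1 - q) * (u + v) ^ q ≤ u ^ q + v ^ q := by
  have h := NNReal.rpow_add_le_mul_rpow_add_rpow (⟨u, hu⟩ : ℝ≥0) (⟨v, hv⟩ : ℝ≥0) hq
  have h' : (u + v) ^ q ≤ (2 : ℝ) ^ (q - 1) * (u ^ q + v ^ q) := by exact_mod_cast h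
  have hpos : (0:ℝ) ≤ (2 : ℝ) ^ (1 - q) := (Real.rpow_pos_of_pos two_pos _).le
  calc (2 : ℝ) ^ (1 - q) * (u + v) ^ q
      ≤ (2 : ℝ) ^ (1 - q) * ((2 : ℝ) ^ (q - 1) * (u ^ q + v ^ q)) :=
        mul_le_mul_of_nonneg_left h' hpos
    _ = u ^ q + v ^ q := by
        rw [← mul_assoc, ← Real.rpow_add two_pos,
          show (1 - q) + (q - 1) = 0 by ring, Real.rpow_zero, one_mul]

private lemma aux_claimC {p : ℝ} (hp : 2 ≤ p) (a : ℝ) {b : ℝ} (hb : 0 < b) :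
    4 ^ (2 - p) * (|a| + b) ^ (p - 2) * b ≤
      |a + b| ^ (p - 2) * (a + b) - |a| ^ (p - 2) * a := by
  have hp1 : (1:ℝ) < p := by linarith
  have h41 : (4 : ℝ) ^ (2 - p) ≤ 1 :=
    Real.rpow_le_one_of_one_le_of_nonpos (by norm_num) (by linarith)
  have h4pos : (0:ℝ) < 4 ^ (2 - p) := Real.rpow_pos_of_pos (by norm_num) _
  rcases le_or_gt 0 a with ha | ha
  · rw [abs_of_nonneg ha, aux_Fnn hp1 (by linarith : (0:ℝ) ≤ a + b), aux_pow_succ hp1 ha]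
    have hinner := aux_inner hp ha hb
    have hXpos : 0 ≤ (a + b) ^ (p - 2) * b :=
      mul_nonneg (Real.rpow_nonneg (by linarith) _) hb.le
    nlinarith [hinner, mul_le_of_le_one_left hXpos h41]
  rcases le_or_gt (a + b) 0 with hab | hab
  · set c := -(a + b) with hc
    have hc0 : (0:ℝ) ≤ c := by simp only [hc]; linarith
    have e1 : |a + b| = c := by rw [abs_of_nonpos hab]
    have e2 : |a| = c + b := by rw [abs_of_neg ha, hc]; ring
    have e3 : a + b = -c := by rw [hc]; ring
    have e4 : a = -(c + b) := by rw [hc]; ring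
    rw [e1, e2, e3, e4]
    rw [show c ^ (p - 2) * -c - (c + b) ^ (p - 2) * -(c + b) =
      (c + b) ^ (p - 2) * (c + b) - c ^ (p - 2) * c by ring,
      aux_pow_succ hp1 (by linarith : (0:ℝ) ≤ c + b), aux_pow_succ hp1 hc0]
    have hinner := aux_inner hp hc0 hb
    have h5 : (c + b + b) ^ (p - 2) ≤ (2 * (c + b)) ^ (p - 2) :=
      Real.rpow_le_rpow (by linarith) (by linarith) (by linarith)
    have h6 : ((2 : ℝ) * (c + b)) ^ (p - 2) = 2 ^ (p - 2) * (c + b) ^ (p - 2) :=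
      Real.mul_rpow (by norm_num) (by linarith)
    have h8 : (2 : ℝ) ^ (2 - p) ≤ 1 :=
      Real.rpow_le_one_of_one_le_of_nonpos (by norm_num) (by linarith)
    have h9 : (0:ℝ) ≤ (c + b) ^ (p - 2) * b :=
      mul_nonneg (Real.rpow_nonneg (by linarith) _) hb.le
    calc 4 ^ (2 - p) * (c + b + b) ^ (p - 2) * b
        ≤ 4 ^ (2 - p) * ((2 * (c + b)) ^ (p - 2)) * b := by gcongr
      _ = (2 : ℝ) ^ (2 - p) * ((c + b) ^ (p - 2) * b) := by
          rw [h6, show (4:ℝ) ^ (2 - p) * (2 ^ (p - 2) * (c + b) ^ (p - 2)) * b =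
            (4 ^ (2 - p) * 2 ^ (p - 2)) * ((c + b) ^ (p - 2) * b) by ring, aux_42]
      _ ≤ 1 * ((c + b) ^ (p - 2) * b) := mul_le_mul_of_nonneg_right h8 h9
      _ = (c + b) ^ (p - 2) * b := one_mul _
      _ ≤ (c + b) ^ (p - 1) - c ^ (p - 1) := hinner
  · rw [abs_of_neg ha, aux_Fnn hp1 hab.le,
      show (-a : ℝ) ^ (p - 2) * a = -((-a) ^ (p - 2) * -a) by ring,
      aux_pow_succ hp1 (by linarith : (0:ℝ) ≤ -a)]
    have hconv := aux_convex (show (1:ℝ) ≤ p - 1 by linarith)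
      (u := a + b) (v := -a) hab.le (by linarith)
    rw [show (1:ℝ) - (p - 1) = 2 - p by ring, show a + b + -a = b by ring] at hconv
    have h5 : (-a + b) ^ (p - 2) ≤ (2 * b) ^ (p - 2) :=
      Real.rpow_le_rpow (by linarith) (by linarith) (by linarith)
    have h6 : ((2 : ℝ) * b) ^ (p - 2) = 2 ^ (p - 2) * b ^ (p - 2) :=
      Real.mul_rpow (by norm_num) hb.le
    have hbp : b ^ (p - 2) * b = b ^ (p - 1) := aux_pow_succ hp1 hb.le
    calc 4 ^ (2 - p) * (-a + b) ^ (p - 2) * b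
        ≤ 4 ^ (2 - p) * ((2 * b) ^ (p - 2)) * b := by gcongr
      _ = (2 : ℝ) ^ (2 - p) * b ^ (p - 1) := by
          rw [h6, show (4:ℝ) ^ (2 - p) * (2 ^ (p - 2) * b ^ (p - 2)) * b =
            (4 ^ (2 - p) * 2 ^ (p - 2)) * (b ^ (p - 2) * b) by ring, aux_42, hbp]
      _ ≤ (a + b) ^ (p - 1) + (-a) ^ (p - 1) := hconv
      _ = (a + b) ^ (p - 1) - -((-a) ^ (p - 1)) := by ring

private lemma aux_hasDerivAt {p : ℝ} (hp : 2 ≤ p) (x : ℝ) :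
    HasDerivAt (fun y : ℝ => |y| ^ (p - 2) * y) ((p - 1) * |x| ^ (p - 2)) x := by
  rcases lt_trichotomy x 0 with hx | rfl | hx
  · have h1 : HasDerivAt (fun z : ℝ => z ^ (p - 1)) ((p - 1) * (-x) ^ (p - 2)) (-x) := by
      have h := Real.hasDerivAt_rpow_const (x := -x) (p := p - 1)
        (Or.inl (by intro h; nlinarith : (-x : ℝ) ≠ 0))
      simpa [show p - 1 - 1 = p - 2 by ring] using h
    have h2 := (h1.comp x (hasDerivAt_neg x)).neg
    have h3 : HasDerivAt (fun y : ℝ => -((-y) ^ (p - 1))) ((p - 1) * |x| ^ (p - 2)) x := by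
      refine h2.congr_deriv ?_
      rw [abs_of_neg hx]
      ring
    refine h3.congr_of_eventuallyEq ?_
    filter_upwards [Iio_mem_nhds hx] with y hy
    have hy0 : y < 0 := hy
    rw [abs_of_neg hy0, show p - 1 = (p - 2) + 1 by ring,
      Real.rpow_add (by linarith : (0:ℝ) < -y), Real.rpow_one]
    ring
  · rcases eq_or_lt_of_le hp with hp2 | hp2
    · have hfun : (fun y : ℝ => |y| ^ (p - 2) * y) = fun y => y := by
        funext y
        rw [show p - 2 = 0 by linarith, Real.rpow_zero, one_mul]
      rw [hfun, show (p - 1) * |(0:ℝ)| ^ (p - 2) = 1 by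
        rw [show p - 2 = 0 by linarith, Real.rpow_zero]; nlinarith]
      exact hasDerivAt_id 0
    · rw [hasDerivAt_iff_tendsto_slope]
      have hval : (p - 1) * |(0:ℝ)| ^ (p - 2) = 0 := by
        rw [abs_zero, Real.zero_rpow (by intro h; nlinarith : p - 2 ≠ 0), mul_zero]
      rw [hval]
      have hc : ContinuousAt (fun y : ℝ => |y| ^ (p - 2)) 0 :=
        (Real.continuousAt_rpow_const |0| (p - 2) (Or.inr (by linarith))).comp
          continuous_abs.continuousAt
      have hc0 : Tendsto (fun y : ℝ => |y| ^ (p - 2)) (𝓝 0) (𝓝 0) := by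
        have := hc.tendsto
        rwa [abs_zero, Real.zero_rpow (by intro h; nlinarith : p - 2 ≠ 0)] at this
      refine Tendsto.congr' ?_ (hc0.mono_left nhdsWithin_le_nhds)
      filter_upwards [self_mem_nhdsWithin] with y hy
      have hy' : (y : ℝ) ≠ 0 := hy
      rw [slope_def_field]
      simp only [mul_zero, sub_zero]
      field_simp
  · have h1 : HasDerivAt (fun z : ℝ => z ^ (p - 1)) ((p - 1) * x ^ (p - 2)) x := by
      have h := Real.hasDerivAt_rpow_const (x := x) (p := p - 1) (Or.inl hx.ne')
      simpa [show p - 1 - 1 = p - 2 by ring] using h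
    have h3 : HasDerivAt (fun z : ℝ => z ^ (p - 1)) ((p - 1) * |x| ^ (p - 2)) x := by
      rwa [abs_of_pos hx]
    refine h3.congr_of_eventuallyEq ?_
    filter_upwards [Ioi_mem_nhds hx] with y hy
    have hy0 : (0:ℝ) < y := hy
    rw [abs_of_pos hy0, show p - 1 = (p - 2) + 1 by ring, Real.rpow_add hy0, Real.rpow_one]

/- STATEMENT 5 -/
theorem stmt5 (p a b : ℝ) (hp : 1 < p) (hab : ¬(a = 0 ∧ b = 0)) :
    (if p < 2 then 1 else 4 ^ (2 - p) / (p - 1)) * (|a| + |b|) ^ (p - 2) ≤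
      ∫ t in (0:ℝ)..1, |a + b * t| ^ (p - 2) := by
  rcases lt_or_ge p 2 with hp2 | hp2
  · -- Case 1 < p < 2 : pointwise bound
    rw [if_pos hp2, one_mul]
    by_cases hb : b = 0
    · subst hb
      have ha : a ≠ 0 := by rintro rfl; exact hab ⟨rfl, rfl⟩
      simp only [zero_mul, add_zero, abs_zero]
      rw [intervalIntegral.integral_const]
      simp
    · have hint := aux_ii_affine (show (-1:ℝ) < p - 2 by linarith) a hb
      have hconst : IntervalIntegrable (fun _ : ℝ => (|a| + |b|) ^ (p - 2)) volume 0 1 :=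
        intervalIntegrable_const
      have h0 : ∀ᵐ t : ℝ, t ≠ -a / b := by
        rw [ae_iff]
        have : {t : ℝ | ¬ t ≠ -a / b} = {-a / b} := by ext t; simp
        rw [this]
        exact measure_singleton _
      have hmono : (fun _ : ℝ => (|a| + |b|) ^ (p - 2)) ≤ᵐ[volume.restrict (Set.Icc 0 1)]
          fun t => |a + b * t| ^ (p - 2) := by
        filter_upwards [ae_restrict_mem measurableSet_Icc, ae_restrict_of_ae h0]
          with t htI ht
        have habt : a + b * t ≠ 0 := by
          intro h
          apply ht
          field_simp
          linarith
        have h1 : 0 < |a + b * t| := abs_pos.mpr habt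
        have h2 : |a + b * t| ≤ |a| + |b| := by
          calc |a + b * t| ≤ |a| + |b * t| := abs_add_le _ _
            _ = |a| + |b| * |t| := by rw [abs_mul]
            _ ≤ |a| + |b| * 1 := by
                have ht1 : |t| ≤ 1 := by
                  rw [abs_le]; exact ⟨by linarith [htI.1], htI.2⟩
                gcongr
            _ = |a| + |b| := by ring
        exact Real.rpow_le_rpow_of_nonpos h1 h2 (by linarith)
      calc (|a| + |b|) ^ (p - 2)
          = ∫ _ in (0:ℝ)..1, (|a| + |b|) ^ (p - 2) := by
            rw [intervalIntegral.integral_const]; simp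
        _ ≤ ∫ t in (0:ℝ)..1, |a + b * t| ^ (p - 2) :=
            intervalIntegral.integral_mono_ae_restrict zero_le_one hconst hint hmono
  · -- Case 2 ≤ p
    rw [if_neg (not_lt.mpr hp2)]
    have hp1 : (0:ℝ) < p - 1 := by linarith
    have h41 : (4 : ℝ) ^ (2 - p) ≤ 1 :=
      Real.rpow_le_one_of_one_le_of_nonpos (by norm_num) (by linarith)
    by_cases hb : b = 0
    · subst hb
      have ha : a ≠ 0 := by rintro rfl; exact hab ⟨rfl, rfl⟩
      simp only [zero_mul, add_zero, abs_zero]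
      rw [intervalIntegral.integral_const]
      simp only [sub_zero, one_smul]
      have hle : 4 ^ (2 - p) / (p - 1) ≤ 1 := by
        rw [div_le_one hp1]; linarith
      have hnn : (0:ℝ) ≤ |a| ^ (p - 2) := Real.rpow_nonneg (abs_nonneg a) _
      nlinarith [mul_le_of_le_one_left hnn hle]
    · set I := ∫ t in (0:ℝ)..1, |a + b * t| ^ (p - 2) with hI
      have hderiv : ∀ t ∈ Set.uIcc (0:ℝ) 1,
          HasDerivAt (fun t : ℝ => |a + b * t| ^ (p - 2) * (a + b * t))
            ((p - 1) * |a + b * t| ^ (p - 2) * b) t := by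
        intro t _
        have h1 := aux_hasDerivAt hp2 (a + b * t)
        have h2 : HasDerivAt (fun t : ℝ => a + b * t) b t := by
          simpa using ((hasDerivAt_id t).const_mul b).const_add a
        exact h1.comp t h2
      have hcont : Continuous (fun t : ℝ => (p - 1) * |a + b * t| ^ (p - 2) * b) := by
        apply Continuous.mul _ continuous_const
        apply Continuous.mul continuous_const
        apply Continuous.rpow_const
        · exact (continuous_const.add (continuous_const.mul continuous_id)).abs
        · intro x; right; linarith
      have hii : IntervalIntegrable (fun t : ℝ => (p - 1) * |a + b * t| ^ (p - 2) * b)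
          volume 0 1 := hcont.intervalIntegrable 0 1
      have hFTC := intervalIntegral.integral_eq_sub_of_hasDerivAt hderiv hii
      have hre : (fun t : ℝ => (p - 1) * |a + b * t| ^ (p - 2) * b) =
          fun t => ((p - 1) * b) * (|a + b * t| ^ (p - 2)) := by funext t; ring
      rw [hre, intervalIntegral.integral_const_mul] at hFTC
      simp only [mul_one, mul_zero, add_zero] at hFTC
      -- hFTC : (p-1)*b * I = |a+b|^(p-2)*(a+b) - |a|^(p-2)*a
      have key : 4 ^ (2 - p) * (|a| + |b|) ^ (p - 2) * (b * b) ≤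
          (|a + b| ^ (p - 2) * (a + b) - |a| ^ (p - 2) * a) * b := by
        rcases lt_or_gt_of_ne hb with hbneg | hbpos
        · have h := aux_claimC hp2 (-a) (show (0:ℝ) < -b by linarith)
          rw [show (-a + -b : ℝ) = -(a + b) by ring, abs_neg, abs_neg] at h
          rw [abs_of_neg hbneg]
          nlinarith [h]
        · have h := aux_claimC hp2 a hbpos
          rw [abs_of_pos hbpos]
          nlinarith [h]
      have key2 : 4 ^ (2 - p) * (|a| + |b|) ^ (p - 2) * (b * b) ≤
          (I * (p - 1)) * (b * b) := by
        rw [← hI] at hFTC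
        calc 4 ^ (2 - p) * (|a| + |b|) ^ (p - 2) * (b * b)
            ≤ (|a + b| ^ (p - 2) * (a + b) - |a| ^ (p - 2) * a) * b := key
          _ = ((p - 1) * b * I) * b := by rw [hFTC]
          _ = (I * (p - 1)) * (b * b) := by ring
      have hb2 : (0:ℝ) < b * b := mul_self_pos.mpr hb
      rw [div_mul_eq_mul_div, div_le_iff₀ hp1]
      exact le_of_mul_le_mul_right key2 hb2

end FracP
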